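/- arXiv:2201.01465 — 3 statements merged into one kernel-verified Lean document; each statement's English description precedes it below -/
import Mathlib

section
/- Let k≥1 be an integer and suppose |a_l|≤1 for l=1,…,2k−1. If u₁ and u₂ are both solutions with data p at infinity, then u₁ = u₂. -/
noncomputable section

open Complex MeasureTheory Metric

/-- The function `u_s = r^s · cos(s·θ)` in polar coordinates, where `r = |z|` and
`θ = arg z ∈ (−π, π]`.  (It takes the value `0` at the origin.) -/
def us (s : ℝ) (z : ℂ) : ℝ := ‖z‖ ^ s * Real.cos (s * Complex.arg z)

/-- The average of `u` over the circle `∂B_ρ(y)`. -/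
def circAvg (u : ℂ → ℝ) (y : ℂ) (ρ : ℝ) : ℝ :=
  (2 * Real.pi)⁻¹ * ∫ t in (0:ℝ)..(2 * Real.pi), u (y + (ρ : ℂ) * Complex.exp ((t : ℂ) * Complex.I))

/-- Mean-value characterization of harmonicity of a continuous function on a set `A`:
the value at a point equals the average over every circle whose closed disc lies in `A`. -/
def IsHarmOn (u : ℂ → ℝ) (A : Set ℂ) : Prop :=
  ContinuousOn u A ∧
    ∀ y : ℂ, ∀ ρ : ℝ, 0 < ρ → closedBall y ρ ⊆ A → circAvg u y ρ = u y

/-- The slit `S = {(x₁, 0) : x₁ ≤ 0}`. -/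
def Slit : Set ℂ := {z : ℂ | z.im = 0 ∧ z.re ≤ 0}

/-- A solution to the thin obstacle problem in `Ω`: continuous, even in `x₂`,
superharmonic (mean-value form), nonnegative on `{x₂ = 0}`, and harmonic away from
the contact set `{(x₁,0) : u(x₁,0) = 0}`. -/
def IsTOS (u : ℂ → ℝ) (Ω : Set ℂ) : Prop :=
  ContinuousOn u Ω ∧
    (∀ z ∈ Ω, (starRingEnd ℂ) z ∈ Ω → u ((starRingEnd ℂ) z) = u z) ∧
    (∀ y : ℂ, ∀ ρ : ℝ, 0 < ρ → closedBall y ρ ⊆ Ω → circAvg u y ρ ≤ u y) ∧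
    (∀ z ∈ Ω, z.im = 0 → 0 ≤ u z) ∧
    IsHarmOn u (Ω \ {z : ℂ | z.im = 0 ∧ u z = 0})

/-- A solution to the thin obstacle problem in all of `ℝ²`: a solution in `B_R` for all `R > 0`. -/
def IsTOSR2 (u : ℂ → ℝ) : Prop := ∀ R : ℝ, 0 < R → IsTOS u (ball 0 R)

/-- The data `p = u_{2k−1/2} + Σ_{l=1}^{2k−1} a_l · u_{2k−1/2−l}`. -/
def pData (k : ℕ) (a : ℕ → ℝ) (z : ℂ) : ℝ :=
  us (2 * (k:ℝ) - 1/2) z +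
    ∑ l ∈ Finset.Icc 1 (2*k-1), a l * us (2 * (k:ℝ) - 1/2 - (l:ℝ)) z

/-- `u` is a solution to the thin obstacle problem in `ℝ²` with data `p` at infinity. -/
def SolWithData (u p : ℂ → ℝ) : Prop :=
  IsTOSR2 u ∧ ∃ C : ℝ, ∀ z : ℂ, |u z - p z| ≤ C

namespace TOP


lemma cont_circle (y : ℂ) (ρ : ℝ) :
    Continuous (fun t : ℝ => y + (ρ : ℂ) * Complex.exp ((t : ℂ) * Complex.I)) := by fun_prop

lemma II_of_cont {u : ℂ → ℝ} (hu : Continuous u) (y : ℂ) (ρ : ℝ) :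
    IntervalIntegrable (fun t : ℝ => u (y + (ρ : ℂ) * Complex.exp ((t : ℂ) * Complex.I)))
      volume 0 (2 * Real.pi) :=
  (hu.comp (cont_circle y ρ)).intervalIntegrable _ _

lemma II_of_meas_bdd {f : ℝ → ℝ} (hm : Measurable f) (C : ℝ) (h : ∀ t, |f t| ≤ C)
    (a b : ℝ) : IntervalIntegrable f volume a b := by
  rw [intervalIntegrable_iff]
  refine Integrable.mono' (g := fun _ => C)
    ((integrableOn_const_iff (C := C)).2 (Or.inr measure_Ioc_lt_top))
    hm.aestronglyMeasurable ?_
  exact Filter.Eventually.of_forall h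

lemma circAvg_sub {u v : ℂ → ℝ} {y : ℂ} {ρ : ℝ}
    (hu : IntervalIntegrable (fun t : ℝ => u (y + (ρ : ℂ) * Complex.exp ((t : ℂ) * Complex.I)))
      volume 0 (2 * Real.pi))
    (hv : IntervalIntegrable (fun t : ℝ => v (y + (ρ : ℂ) * Complex.exp ((t : ℂ) * Complex.I)))
      volume 0 (2 * Real.pi)) :
    circAvg (fun z => u z - v z) y ρ = circAvg u y ρ - circAvg v y ρ := by
  unfold circAvg
  rw [intervalIntegral.integral_sub hu hv]; ring

lemma circAvg_mono {u v : ℂ → ℝ} {y : ℂ} {ρ : ℝ} (h : ∀ z, u z ≤ v z)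
    (hu : IntervalIntegrable (fun t : ℝ => u (y + (ρ : ℂ) * Complex.exp ((t : ℂ) * Complex.I)))
      volume 0 (2 * Real.pi))
    (hv : IntervalIntegrable (fun t : ℝ => v (y + (ρ : ℂ) * Complex.exp ((t : ℂ) * Complex.I)))
      volume 0 (2 * Real.pi)) :
    circAvg u y ρ ≤ circAvg v y ρ := by
  unfold circAvg
  have h2 : (0:ℝ) ≤ (2 * Real.pi)⁻¹ := by positivity
  refine mul_le_mul_of_nonneg_left ?_ h2
  exact intervalIntegral.integral_mono Real.two_pi_pos.le hu hv (fun t => h _)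

lemma circAvg_nonneg {u : ℂ → ℝ} {y : ℂ} {ρ : ℝ} (h : ∀ z, 0 ≤ u z) :
    0 ≤ circAvg u y ρ := by
  unfold circAvg
  have h2 : (0:ℝ) ≤ (2 * Real.pi)⁻¹ := by positivity
  refine mul_nonneg h2 ?_
  exact intervalIntegral.integral_nonneg Real.two_pi_pos.le (fun t _ => h _)

lemma circAvg_const (c : ℝ) (y : ℂ) (ρ : ℝ) : circAvg (fun _ => c) y ρ = c := by
  unfold circAvg
  rw [intervalIntegral.integral_const]
  field_simp
  simp

/-- If `|u - v| ≤ C` then circle averages differ by at most `C`. -/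
lemma circAvg_close {u v : ℂ → ℝ} {C : ℝ} (h : ∀ z, |u z - v z| ≤ C) {y : ℂ} {ρ : ℝ}
    (hu : IntervalIntegrable (fun t : ℝ => u (y + (ρ : ℂ) * Complex.exp ((t : ℂ) * Complex.I)))
      volume 0 (2 * Real.pi))
    (hv : IntervalIntegrable (fun t : ℝ => v (y + (ρ : ℂ) * Complex.exp ((t : ℂ) * Complex.I)))
      volume 0 (2 * Real.pi)) :
    |circAvg u y ρ - circAvg v y ρ| ≤ C := by
  have hs := circAvg_sub hu hv
  rw [← hs]
  unfold circAvg
  rw [abs_mul, _root_.abs_of_nonneg (by positivity : (0:ℝ) ≤ (2 * Real.pi)⁻¹)]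
  have habs : |∫ t in (0:ℝ)..(2 * Real.pi),
      (fun z => u z - v z) (y + (ρ : ℂ) * Complex.exp ((t : ℂ) * Complex.I))| ≤ C * (2 * Real.pi) := by
    have h1 : |∫ t in (0:ℝ)..(2 * Real.pi),
        (fun z => u z - v z) (y + (ρ : ℂ) * Complex.exp ((t : ℂ) * Complex.I))|
        ≤ ∫ t in (0:ℝ)..(2 * Real.pi),
          |u (y + (ρ : ℂ) * Complex.exp ((t : ℂ) * Complex.I)) -
            v (y + (ρ : ℂ) * Complex.exp ((t : ℂ) * Complex.I))| := by
      exact intervalIntegral.abs_integral_le_integral_abs Real.two_pi_pos.le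
    refine h1.trans ?_
    have h3 : ∫ t in (0:ℝ)..(2 * Real.pi),
          |u (y + (ρ : ℂ) * Complex.exp ((t : ℂ) * Complex.I)) -
            v (y + (ρ : ℂ) * Complex.exp ((t : ℂ) * Complex.I))|
        ≤ ∫ _t in (0:ℝ)..(2 * Real.pi), C := by
      refine intervalIntegral.integral_mono_on Real.two_pi_pos.le ?_ (by simp) (fun t _ => h _)
      exact (hu.sub hv).abs
    simpa [mul_comm] using h3
  calc (2 * Real.pi)⁻¹ * |∫ t in (0:ℝ)..(2 * Real.pi),
      (fun z => u z - v z) (y + (ρ : ℂ) * Complex.exp ((t : ℂ) * Complex.I))|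
      ≤ (2 * Real.pi)⁻¹ * (C * (2 * Real.pi)) := by
        exact mul_le_mul_of_nonneg_left habs (by positivity)
    _ = C := by field_simp



lemma circle_mem_sphere {ρ : ℝ} (hρ : 0 < ρ) (y : ℂ) (t : ℝ) :
    y + (ρ : ℂ) * Complex.exp ((t : ℂ) * Complex.I) ∈ sphere y ρ := by
  simp [Complex.dist_eq, add_sub_cancel_left, map_mul, Complex.norm_exp, abs_of_pos hρ]

lemma exists_param {y z : ℂ} {ρ : ℝ} (hρ : 0 < ρ) (hz : z ∈ sphere y ρ) :
    ∃ t ∈ Set.Icc (0:ℝ) (2 * Real.pi),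
      y + (ρ : ℂ) * Complex.exp ((t : ℂ) * Complex.I) = z := by
  have hd : ‖z - y‖ = ρ := by rwa [mem_sphere_iff_norm] at hz
  have harg := Complex.arg_mem_Ioc (z - y)
  have key : ((ρ:ℂ)) * Complex.exp ((Complex.arg (z - y) : ℂ) * Complex.I) = z - y := by
    rw [← hd]; exact Complex.norm_mul_exp_arg_mul_I (z - y)
  rcases le_or_gt 0 (Complex.arg (z - y)) with h0 | h0
  · refine ⟨Complex.arg (z - y), ⟨h0, ?_⟩, by rw [key]; ring⟩
    have := harg.2; nlinarith [Real.pi_pos]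
  · refine ⟨Complex.arg (z - y) + 2 * Real.pi,
      ⟨by nlinarith [harg.1], by nlinarith [Real.pi_pos]⟩, ?_⟩
    have : Complex.exp (((Complex.arg (z - y) + 2 * Real.pi : ℝ) : ℂ) * Complex.I)
        = Complex.exp ((Complex.arg (z - y) : ℂ) * Complex.I) := by
      push_cast
      rw [add_mul, Complex.exp_add, Complex.exp_two_pi_mul_I, mul_one]
    rw [this, key]; ring

/-- a nonnegative continuous function with nonpositive integral vanishes on `[a,b]`. -/
lemma cont_nonneg_int_zero {g : ℝ → ℝ} (hg : Continuous g) (hnn : ∀ t, 0 ≤ g t)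
    {a b : ℝ} (hab : a < b) (hint : ∫ t in a..b, g t ≤ 0) :
    ∀ t ∈ Set.Icc a b, g t = 0 := by
  intro t0 ht0
  by_contra hne
  have hpos : 0 < g t0 := lt_of_le_of_ne (hnn t0) (Ne.symm hne)
  set c := g t0 / 2 with hc
  have hcpos : 0 < c := by positivity
  obtain ⟨δ, hδ, hball⟩ := Metric.continuousAt_iff.1 hg.continuousAt (g t0 - c) (by simp [hc]; linarith)
  set a' := max a (t0 - δ/2) with ha'
  set b' := min b (t0 + δ/2) with hb'
  have hab1 : a' ≤ t0 := max_le ht0.1 (by linarith)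
  have hab2 : t0 ≤ b' := le_min ht0.2 (by linarith)
  have hsub : ∀ t ∈ Set.Icc a' b', c ≤ g t := by
    intro t ht
    have h1 : |t - t0| < δ := by
      rw [abs_sub_lt_iff]
      constructor
      · have := ht.2; have : t ≤ t0 + δ/2 := le_trans this (min_le_right _ _); linarith
      · have := ht.1; have : t0 - δ/2 ≤ t := le_trans (le_max_right _ _) this; linarith
    have := hball (by simpa [Real.dist_eq] using h1)
    rw [Real.dist_eq, abs_sub_lt_iff] at this
    linarith [this.2]
  -- strict inequality a' < b' : both contain t0; need strict. if a' = b' = t0 the middle integral is 0!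
  -- fix: t0 could be an endpoint; but interval [a',b'] has positive length since...
  have hlen : a' < b' := by
    rcases lt_or_ge a' b' with h | h
    · exact h
    · exfalso
      have h1 : a ≤ t0 := ht0.1
      have h2 : t0 ≤ b := ht0.2
      have : max a (t0 - δ/2) < min b (t0 + δ/2) := by
        rcases le_or_gt t0 ((a+b)/2) with hmid | hmid
        · apply max_lt_iff.2
          constructor
          · apply lt_min_iff.2; constructor <;> nlinarith
          · apply lt_min_iff.2; constructor <;> nlinarith
        · apply max_lt_iff.2
          constructor
          · apply lt_min_iff.2; constructor <;> nlinarith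
          · apply lt_min_iff.2; constructor <;> nlinarith
      exact absurd this (not_lt.2 h)
  have hI1 : (0:ℝ) ≤ ∫ t in a..a', g t :=
    intervalIntegral.integral_nonneg (le_max_left _ _) (fun u _ => hnn u)
  have hI3 : (0:ℝ) ≤ ∫ t in b'..b, g t :=
    intervalIntegral.integral_nonneg (min_le_left _ _) (fun u _ => hnn u)
  have hI2 : (b' - a') * c ≤ ∫ t in a'..b', g t := by
    have h := intervalIntegral.integral_mono_on hlen.le
      (intervalIntegrable_const : IntervalIntegrable (fun _ => c) volume a' b')
      (hg.intervalIntegrable _ _) hsub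
    rwa [intervalIntegral.integral_const, smul_eq_mul] at h
  have hsplit : ∫ t in a..b, g t =
      (∫ t in a..a', g t) + (∫ t in a'..b', g t) + (∫ t in b'..b, g t) := by
    rw [intervalIntegral.integral_add_adjacent_intervals (hg.intervalIntegrable _ _)
      (hg.intervalIntegrable _ _), intervalIntegral.integral_add_adjacent_intervals
      (hg.intervalIntegrable _ _) (hg.intervalIntegrable _ _)]
  nlinarith [mul_pos hcpos (sub_pos.2 hlen)]

/-- equality propagation on circles: if `f ≤ s` on the sphere and the average is `≥ s`,
then `f = s` on the sphere. -/
lemma circle_eq_of_avg_ge {f : ℂ → ℝ} (hf : Continuous f) {y : ℂ} {ρ : ℝ} (hρ : 0 < ρ)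
    {s : ℝ} (hle : ∀ z ∈ sphere y ρ, f z ≤ s) (havg : s ≤ circAvg f y ρ) :
    ∀ z ∈ sphere y ρ, f z = s := by
  set G : ℝ → ℝ := fun t => s - f (y + (ρ : ℂ) * Complex.exp ((t : ℂ) * Complex.I)) with hG
  have hGc : Continuous G := by fun_prop
  have hGnn : ∀ t, 0 ≤ G t := fun t =>
    sub_nonneg.2 (hle _ (circle_mem_sphere hρ y t))
  have hint : ∫ t in (0:ℝ)..(2*Real.pi), G t ≤ 0 := by
    have h1 : ∫ t in (0:ℝ)..(2*Real.pi), G t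
        = 2 * Real.pi * s - ∫ t in (0:ℝ)..(2*Real.pi),
            f (y + (ρ : ℂ) * Complex.exp ((t : ℂ) * Complex.I)) := by
      have hfi : IntervalIntegrable
          (fun t : ℝ => f (y + (ρ : ℂ) * Complex.exp ((t : ℂ) * Complex.I)))
          volume 0 (2 * Real.pi) :=
        ((by fun_prop : Continuous (fun t : ℝ =>
          f (y + (ρ : ℂ) * Complex.exp ((t : ℂ) * Complex.I)))).intervalIntegrable _ _)
      rw [hG, intervalIntegral.integral_sub intervalIntegrable_const hfi]
      simp [mul_comm]
    have h2 : 2 * Real.pi * s ≤ ∫ t in (0:ℝ)..(2*Real.pi),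
        f (y + (ρ : ℂ) * Complex.exp ((t : ℂ) * Complex.I)) := by
      have h := havg
      unfold circAvg at h
      have h' := mul_le_mul_of_nonneg_left h (le_of_lt Real.two_pi_pos)
      rw [← mul_assoc, mul_inv_cancel₀ Real.two_pi_pos.ne', one_mul] at h'
      linarith
    linarith
  have hzero := cont_nonneg_int_zero hGc hGnn Real.two_pi_pos hint
  intro z hz
  obtain ⟨t, ht, hteq⟩ := exists_param hρ hz
  have := hzero t ht
  rw [hG] at this
  simp only at this
  rw [hteq] at this
  linarith



/-- modified log, globally continuous -/
def Hlog (z : ℂ) : ℝ := Real.log (max (‖z‖) (1/2))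

lemma Hlog_cont : Continuous Hlog := by
  apply Real.continuousOn_log.comp_continuous (continuous_norm.max continuous_const)
  intro z
  simp only [Set.mem_compl_iff, Set.mem_singleton_iff]
  have : (1:ℝ)/2 ≤ max (‖z‖) (1/2) := le_max_right _ _
  intro h; rw [h] at this; norm_num at this

lemma Hlog_eq {z : ℂ} (h : 1/2 < ‖z‖) : Hlog z = Real.log (‖z‖) := by
  unfold Hlog; rw [max_eq_left h.le]

lemma circAvg_Hlog (y : ℂ) {ρ : ℝ} (hρ : 0 < ρ) (hlt : ρ + 1/2 < ‖y‖) :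
    circAvg Hlog y ρ = Real.log (‖y‖) := by
  have hay : 1/2 < ‖y‖ := by linarith
  have hy0 : y ≠ 0 := by
    intro h; rw [h] at hay; simp at hay; linarith
  set f : ℂ → ℂ := fun z => Complex.log (z / y) with hf
  -- membership of the disc in the slit plane after division
  have hmem : ∀ z ∈ closedBall y ρ, z / y ∈ slitPlane := by
    intro z hz
    left
    have hzy : ‖z - y‖ ≤ ρ := by
      rwa [mem_closedBall_iff_norm] at hz
    have hw : ‖(z - y) / y‖ < 1 := by
      rw [norm_div, div_lt_one (by positivity : (0:ℝ) < ‖y‖)]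
      linarith
    have hzy' : z / y = 1 + (z - y) / y := by field_simp; ring
    rw [hzy']
    simp only [Complex.add_re, Complex.one_re]
    have := Complex.abs_re_le_norm ((z - y) / y)
    have h2 : -((z - y) / y).re ≤ ‖(z - y) / y‖ := by
      rw [abs_le] at this; linarith [this.1]
    linarith [abs_le.1 (Complex.abs_re_le_norm ((z - y) / y)) |>.1]
  have hzne : ∀ z ∈ closedBall y ρ, z ≠ 0 := by
    intro z hz h0
    have hzy : ‖z - y‖ ≤ ρ := by rwa [mem_closedBall_iff_norm] at hz
    rw [h0] at hzy
    simp only [zero_sub, norm_neg] at hzy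
    linarith
  have hcont : ContinuousOn f (closedBall y ρ) := by
    intro z hz
    have hca : ContinuousAt (fun w : ℂ => Complex.log (w / y)) z :=
      ContinuousAt.comp (g := Complex.log) (f := fun w : ℂ => w / y) (x := z)
        (continuousAt_clog (hmem z hz)) ((continuous_id.div_const y).continuousAt)
    exact hca.continuousWithinAt
  have hdiff : ∀ z ∈ ball y ρ \ (∅ : Set ℂ), DifferentiableAt ℂ f z := by
    intro z hz
    have hz' : z ∈ closedBall y ρ := ball_subset_closedBall hz.1
    exact (Complex.differentiableAt_log (hmem z hz')).comp z (differentiableAt_id.div_const y)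
  have cauchy := Complex.circleIntegral_sub_center_inv_smul_of_differentiable_on_off_countable
    hρ Set.countable_empty hcont hdiff
  have hfy : f y = 0 := by
    rw [hf]; simp only [div_self hy0, Complex.log_one]
  rw [hfy, smul_zero] at cauchy
  -- unfold circle integral
  have hγmem : ∀ t : ℝ, circleMap y ρ t ∈ closedBall y ρ :=
    fun t => circleMap_mem_closedBall y hρ.le t
  have hγcont : Continuous (fun t : ℝ => f (circleMap y ρ t)) :=
    hcont.comp_continuous (continuous_circleMap y ρ) hγmem
  have hII : IntervalIntegrable (fun t : ℝ => f (circleMap y ρ t)) volume 0 (2*Real.pi) :=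
    hγcont.intervalIntegrable _ _
  have hunfold : (∮ z in C(y, ρ), (z - y)⁻¹ • f z)
      = Complex.I • ∫ t in (0:ℝ)..(2*Real.pi), f (circleMap y ρ t) := by
    rw [circleIntegral, ← intervalIntegral.integral_smul]
    apply intervalIntegral.integral_congr
    intro t _
    simp only [deriv_circleMap, circleMap_sub_center, smul_eq_mul]
    have hne : circleMap 0 ρ t ≠ 0 := by
      simp only [circleMap, zero_add]
      exact mul_ne_zero (by exact_mod_cast hρ.ne') (Complex.exp_ne_zero _)
    field_simp
  rw [hunfold] at cauchy
  have hint0 : ∫ t in (0:ℝ)..(2*Real.pi), f (circleMap y ρ t) = 0 := by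
    rcases smul_eq_zero.1 cauchy with h | h
    · exact absurd h Complex.I_ne_zero
    · exact h
  have hre : ∫ t in (0:ℝ)..(2*Real.pi), (f (circleMap y ρ t)).re = 0 := by
    have h := Complex.reCLM.intervalIntegral_comp_comm hII
    simp only [Complex.reCLM_apply] at h
    rw [h, hint0, Complex.zero_re]
  have habs_lb : ∀ t : ℝ, 1/2 < ‖circleMap y ρ t‖ := by
    intro t
    have h1 : dist (circleMap y ρ t) y = ρ :=
      mem_sphere.1 (circleMap_mem_sphere y hρ.le t)
    rw [Complex.dist_eq] at h1
    have h2 : ‖y‖ - ‖circleMap y ρ t‖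
        ≤ ‖y - circleMap y ρ t‖ := by
      have := norm_sub_norm_le y (circleMap y ρ t)
      simpa using this
    have h3 : ‖y - circleMap y ρ t‖ = ρ := by
      rw [norm_sub_rev]; exact h1
    linarith
  have hγne : ∀ t : ℝ, circleMap y ρ t ≠ 0 := by
    intro t h0
    have := habs_lb t; rw [h0] at this; simp at this; linarith
  have hre_eq : ∀ t : ℝ, (f (circleMap y ρ t)).re
      = Real.log (‖circleMap y ρ t‖) - Real.log (‖y‖) := by
    intro t
    rw [hf]
    simp only [Complex.log_re, norm_div]
    rw [Real.log_div (norm_ne_zero_iff.2 (hγne t)) (norm_ne_zero_iff.2 hy0)]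
  have hkey : ∫ t in (0:ℝ)..(2*Real.pi), Hlog (circleMap y ρ t)
      = 2 * Real.pi * Real.log (‖y‖) := by
    have heq : (fun t : ℝ => Hlog (circleMap y ρ t))
        = fun t : ℝ => (f (circleMap y ρ t)).re + Real.log (‖y‖) := by
      funext t
      rw [Hlog_eq (habs_lb t), hre_eq t]; ring
    have hIIre : IntervalIntegrable (fun t : ℝ => (f (circleMap y ρ t)).re)
        volume 0 (2*Real.pi) := by
      exact (Complex.continuous_re.comp hγcont).intervalIntegrable _ _
    rw [heq, intervalIntegral.integral_add hIIre intervalIntegrable_const, hre]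
    simp [mul_comm]
  show (2 * Real.pi)⁻¹ * (∫ t in (0:ℝ)..(2 * Real.pi),
      Hlog (y + (ρ : ℂ) * Complex.exp ((t : ℂ) * Complex.I))) = Real.log (‖y‖)
  have hγdef : ∀ t : ℝ, y + (ρ : ℂ) * Complex.exp ((t : ℂ) * Complex.I) = circleMap y ρ t := by
    intro t; rfl
  simp_rw [hγdef]
  rw [hkey]
  field_simp



lemma us_meas {s : ℝ} (hs : 0 ≤ s) : Measurable (us s) := by
  unfold us
  have h1 : Continuous fun z : ℂ => ‖z‖ ^ s :=
    (Real.continuous_rpow_const hs).comp continuous_norm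
  exact h1.measurable.mul
    (Real.measurable_cos.comp (measurable_const.mul Complex.measurable_arg))

lemma cast_le_of_mem {k l : ℕ} (hk : 1 ≤ k) (hl : l ∈ Finset.Icc 1 (2*k-1)) :
    1 ≤ (l:ℝ) ∧ (l:ℝ) ≤ 2*(k:ℝ) - 1 := by
  rw [Finset.mem_Icc] at hl
  constructor
  · exact_mod_cast hl.1
  · have h2 : (l:ℝ) ≤ ((2*k-1 : ℕ) : ℝ) := by exact_mod_cast hl.2
    rwa [Nat.cast_sub (by omega), Nat.cast_mul, Nat.cast_ofNat, Nat.cast_one] at h2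

lemma s0_pos {k : ℕ} (hk : 1 ≤ k) : (0:ℝ) < 2*(k:ℝ) - 1/2 := by
  have : (1:ℝ) ≤ (k:ℝ) := by exact_mod_cast hk
  linarith

lemma sl_bounds {k l : ℕ} (hk : 1 ≤ k) (hl : l ∈ Finset.Icc 1 (2*k-1)) :
    1/2 ≤ 2*(k:ℝ) - 1/2 - (l:ℝ) ∧ 2*(k:ℝ) - 1/2 - (l:ℝ) ≤ 2*(k:ℝ) - 1/2 - 1 := by
  obtain ⟨h1, h2⟩ := cast_le_of_mem hk hl
  constructor <;> linarith

lemma pData_meas (k : ℕ) (hk : 1 ≤ k) (a : ℕ → ℝ) : Measurable (pData k a) := by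
  unfold pData
  apply Measurable.add
  · exact us_meas (le_of_lt (s0_pos hk))
  · apply Finset.measurable_sum
    intro l hl
    exact ((us_meas (le_trans (by norm_num) (sl_bounds hk hl).1)).const_mul (a l))

lemma arg_exp_eq {t : ℝ} (h : t ∈ Set.Ioc (-Real.pi) Real.pi) :
    Complex.arg (Complex.exp ((t : ℂ) * Complex.I)) = t := by
  rw [Complex.exp_mul_I]
  exact Complex.arg_cos_add_sin_mul_I h

lemma abs_circle (ρ t : ℝ) (hρ : 0 < ρ) :
    ‖(ρ : ℂ) * Complex.exp ((t : ℂ) * Complex.I)‖ = ρ := by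
  simp [map_mul, Complex.norm_exp, abs_of_pos hρ]

lemma us_circle (s ρ t : ℝ) (hρ : 0 < ρ) :
    us s ((0:ℂ) + (ρ : ℂ) * Complex.exp ((t : ℂ) * Complex.I))
      = ρ ^ s * Real.cos (s * Complex.arg (Complex.exp ((t : ℂ) * Complex.I))) := by
  rw [zero_add]
  unfold us
  rw [abs_circle ρ t hρ, Complex.arg_real_mul _ hρ]

lemma meas_argcirc (s : ℝ) : Measurable
    (fun t : ℝ => Real.cos (s * Complex.arg (Complex.exp ((t : ℂ) * Complex.I)))) := by
  apply Real.measurable_cos.comp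
  apply Measurable.const_mul
  apply Complex.measurable_arg.comp
  exact (Complex.continuous_exp.comp ((Complex.continuous_ofReal).mul continuous_const)).measurable

lemma int_cos_arg (s : ℝ) (hs : 0 < s) :
    ∫ t in (0:ℝ)..(2*Real.pi), Real.cos (s * Complex.arg (Complex.exp ((t : ℂ) * Complex.I)))
      = 2 * Real.sin (s * Real.pi) / s := by
  have hII : ∀ a b : ℝ, IntervalIntegrable
      (fun t : ℝ => Real.cos (s * Complex.arg (Complex.exp ((t : ℂ) * Complex.I)))) volume a b :=
    fun a b => II_of_meas_bdd (meas_argcirc s) 1 (fun t => Real.abs_cos_le_one _) a b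
  have hsplit : ∫ t in (0:ℝ)..(2*Real.pi), Real.cos (s * Complex.arg (Complex.exp ((t : ℂ) * Complex.I)))
      = (∫ t in (0:ℝ)..Real.pi, Real.cos (s * Complex.arg (Complex.exp ((t : ℂ) * Complex.I))))
        + ∫ t in Real.pi..(2*Real.pi), Real.cos (s * Complex.arg (Complex.exp ((t : ℂ) * Complex.I))) := by
    rw [intervalIntegral.integral_add_adjacent_intervals (hII _ _) (hII _ _)]
  have h1 : (∫ t in (0:ℝ)..Real.pi, Real.cos (s * Complex.arg (Complex.exp ((t : ℂ) * Complex.I))))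
      = ∫ t in (0:ℝ)..Real.pi, Real.cos (s * t) := by
    apply intervalIntegral.integral_congr
    intro t ht
    rw [Set.uIcc_of_le Real.pi_pos.le] at ht
    show Real.cos (s * Complex.arg (Complex.exp ((t : ℂ) * Complex.I))) = Real.cos (s * t)
    rw [arg_exp_eq ⟨lt_of_lt_of_le (neg_neg_iff_pos.2 Real.pi_pos) ht.1, ht.2⟩]
  have h2 : (∫ t in Real.pi..(2*Real.pi), Real.cos (s * Complex.arg (Complex.exp ((t : ℂ) * Complex.I))))
      = ∫ t in Real.pi..(2*Real.pi), Real.cos (s * (t - 2*Real.pi)) := by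
    apply intervalIntegral.integral_congr_ae
    apply Filter.Eventually.of_forall
    intro t ht
    rw [Set.uIoc_of_le (by linarith [Real.pi_pos] : Real.pi ≤ 2*Real.pi)] at ht
    have hexp : Complex.exp ((t : ℂ) * Complex.I)
        = Complex.exp (((t - 2*Real.pi : ℝ) : ℂ) * Complex.I) := by
      rw [show ((t : ℂ) * Complex.I) = ((t - 2*Real.pi : ℝ) : ℂ) * Complex.I
          + 2 * (Real.pi : ℂ) * Complex.I by push_cast; ring]
      rw [Complex.exp_add, Complex.exp_two_pi_mul_I, mul_one]
    show Real.cos (s * Complex.arg (Complex.exp ((t : ℂ) * Complex.I)))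
        = Real.cos (s * (t - 2*Real.pi))
    rw [hexp, arg_exp_eq ⟨by linarith [ht.1], by linarith [ht.2, Real.pi_pos]⟩]
  have h3 : (∫ t in Real.pi..(2*Real.pi), Real.cos (s * (t - 2*Real.pi)))
      = ∫ t in (-Real.pi)..(0:ℝ), Real.cos (s * t) := by
    have := intervalIntegral.integral_comp_sub_right (a := Real.pi) (b := 2*Real.pi)
      (fun u => Real.cos (s * u)) (2*Real.pi)
    simpa [sub_self, show Real.pi - 2*Real.pi = -Real.pi by ring] using this
  have hcos : ∀ a b : ℝ, ∫ t in a..b, Real.cos (s * t) = (Real.sin (s*b) - Real.sin (s*a))/s := by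
    intro a b
    rw [intervalIntegral.integral_comp_mul_left (fun u => Real.cos u) hs.ne']
    rw [integral_cos]
    rw [smul_eq_mul]; field_simp
  rw [hsplit, h1, h2, h3, hcos, hcos]
  simp [mul_comm]
  field_simp
  ring

lemma II_us {s ρ : ℝ} (hs : 0 ≤ s) (hρ : 0 < ρ) (a b : ℝ) :
    IntervalIntegrable (fun t : ℝ => us s ((0:ℂ) + (ρ:ℂ) * Complex.exp ((t:ℂ) * Complex.I)))
      volume a b := by
  apply II_of_meas_bdd ((us_meas hs).comp (cont_circle 0 ρ).measurable) (ρ ^ s)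
  intro t
  show |us s ((0:ℂ) + (ρ:ℂ) * Complex.exp ((t:ℂ) * Complex.I))| ≤ ρ ^ s
  rw [us_circle s ρ t hρ, abs_mul, _root_.abs_of_nonneg (Real.rpow_nonneg hρ.le s)]
  calc ρ ^ s * |Real.cos (s * Complex.arg (Complex.exp ((t:ℂ) * Complex.I)))|
      ≤ ρ ^ s * 1 := by
        exact mul_le_mul_of_nonneg_left (Real.abs_cos_le_one _) (Real.rpow_nonneg hρ.le s)
    _ = ρ ^ s := mul_one _

lemma circAvg_us {s : ℝ} (hs : 0 < s) {ρ : ℝ} (hρ : 0 < ρ) :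
    circAvg (us s) 0 ρ = ρ ^ s * Real.sin (s * Real.pi) / (Real.pi * s) := by
  unfold circAvg
  rw [show (∫ t in (0:ℝ)..(2*Real.pi), us s ((0:ℂ) + (ρ:ℂ) * Complex.exp ((t:ℂ) * Complex.I)))
      = ∫ t in (0:ℝ)..(2*Real.pi),
          ρ^s * Real.cos (s * Complex.arg (Complex.exp ((t:ℂ) * Complex.I))) from
    intervalIntegral.integral_congr (fun t _ => us_circle s ρ t hρ)]
  rw [intervalIntegral.integral_const_mul, int_cos_arg s hs]
  have hπ := Real.pi_pos
  field_simp

lemma II_pData {k : ℕ} (hk : 1 ≤ k) (a : ℕ → ℝ) {ρ : ℝ} (hρ : 0 < ρ) (b c : ℝ) :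
    IntervalIntegrable (fun t : ℝ => pData k a ((0:ℂ) + (ρ:ℂ) * Complex.exp ((t:ℂ) * Complex.I)))
      volume b c := by
  have h1 := II_us (le_of_lt (s0_pos hk)) hρ b c
  have h2 : IntervalIntegrable (fun t : ℝ => ∑ l ∈ Finset.Icc 1 (2*k-1),
      a l * us (2*(k:ℝ)-1/2-(l:ℝ)) ((0:ℂ) + (ρ:ℂ) * Complex.exp ((t:ℂ) * Complex.I)))
      volume b c := by
    have h3 := IntervalIntegrable.sum (μ := volume) (a := b) (b := c)
      (Finset.Icc 1 (2*k-1))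
      (f := fun l => fun t : ℝ =>
        a l * us (2*(k:ℝ)-1/2-(l:ℝ)) ((0:ℂ) + (ρ:ℂ) * Complex.exp ((t:ℂ) * Complex.I)))
      (fun l hl => (II_us (le_trans (by norm_num) (sl_bounds hk hl).1) hρ b c).const_mul (a l))
    have heq : (∑ l ∈ Finset.Icc 1 (2*k-1), fun t : ℝ =>
        a l * us (2*(k:ℝ)-1/2-(l:ℝ)) ((0:ℂ) + (ρ:ℂ) * Complex.exp ((t:ℂ) * Complex.I)))
        = fun t : ℝ => ∑ l ∈ Finset.Icc 1 (2*k-1),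
            a l * us (2*(k:ℝ)-1/2-(l:ℝ)) ((0:ℂ) + (ρ:ℂ) * Complex.exp ((t:ℂ) * Complex.I)) := by
      funext t
      simp [Finset.sum_apply]
    rwa [heq] at h3
  exact h1.add h2

lemma circAvg_pData {k : ℕ} (hk : 1 ≤ k) (a : ℕ → ℝ) {ρ : ℝ} (hρ : 0 < ρ) :
    circAvg (pData k a) 0 ρ = circAvg (us (2*(k:ℝ)-1/2)) 0 ρ
      + ∑ l ∈ Finset.Icc 1 (2*k-1), a l * circAvg (us (2*(k:ℝ)-1/2-(l:ℝ))) 0 ρ := by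
  unfold circAvg pData
  have h2 : IntervalIntegrable (fun t : ℝ => ∑ l ∈ Finset.Icc 1 (2*k-1),
      a l * us (2*(k:ℝ)-1/2-(l:ℝ)) ((0:ℂ) + (ρ:ℂ) * Complex.exp ((t:ℂ) * Complex.I)))
      volume 0 (2*Real.pi) := by
    have h3 := IntervalIntegrable.sum (μ := volume) (a := (0:ℝ)) (b := 2*Real.pi)
      (Finset.Icc 1 (2*k-1))
      (f := fun l => fun t : ℝ =>
        a l * us (2*(k:ℝ)-1/2-(l:ℝ)) ((0:ℂ) + (ρ:ℂ) * Complex.exp ((t:ℂ) * Complex.I)))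
      (fun l hl => (II_us (le_trans (by norm_num) (sl_bounds hk hl).1) hρ _ _).const_mul (a l))
    have heq : (∑ l ∈ Finset.Icc 1 (2*k-1), fun t : ℝ =>
        a l * us (2*(k:ℝ)-1/2-(l:ℝ)) ((0:ℂ) + (ρ:ℂ) * Complex.exp ((t:ℂ) * Complex.I)))
        = fun t : ℝ => ∑ l ∈ Finset.Icc 1 (2*k-1),
            a l * us (2*(k:ℝ)-1/2-(l:ℝ)) ((0:ℂ) + (ρ:ℂ) * Complex.exp ((t:ℂ) * Complex.I)) := by
      funext t
      simp [Finset.sum_apply]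
    rwa [heq] at h3
  rw [intervalIntegral.integral_add (II_us (le_of_lt (s0_pos hk)) hρ _ _) h2]
  rw [intervalIntegral.integral_finset_sum (μ := volume)
      (f := fun l => fun t : ℝ =>
        a l * us (2*(k:ℝ)-1/2-(l:ℝ)) ((0:ℂ) + (ρ:ℂ) * Complex.exp ((t:ℂ) * Complex.I)))
      (fun l hl =>
      (II_us (le_trans (by norm_num) (sl_bounds hk hl).1) hρ _ _).const_mul (a l))]
  rw [mul_add, Finset.mul_sum]
  congr 1
  apply Finset.sum_congr rfl
  intro l _
  rw [intervalIntegral.integral_const_mul]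
  ring


lemma cont_of_sol {u : ℂ → ℝ} (h : IsTOSR2 u) : Continuous u := by
  rw [continuous_iff_continuousAt]
  intro z
  have hb : z ∈ ball (0:ℂ) (‖z‖ + 1) := by
    rw [mem_ball_zero_iff]
    have : ‖z‖ = ‖z‖ := rfl
    rw [this]; linarith [norm_nonneg z]
  exact ((h _ (by positivity)).1.continuousAt (isOpen_ball.mem_nhds hb))

lemma sin_s0 {k : ℕ} (hk : 1 ≤ k) : Real.sin ((2*(k:ℝ)-1/2) * Real.pi) = -1 := by
  have h : (2*(k:ℝ)-1/2) * Real.pi = (k:ℝ)*(2*Real.pi) - Real.pi/2 := by ring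
  rw [h, Real.sin_nat_mul_two_pi_sub, Real.sin_pi_div_two]

lemma abs_sin_le_one (x : ℝ) : |Real.sin x| ≤ 1 :=
  abs_le.mpr ⟨Real.neg_one_le_sin x, Real.sin_le_one x⟩

lemma no_positive_sol {k : ℕ} (hk : 1 ≤ k) {a : ℕ → ℝ}
    (ha : ∀ l ∈ Finset.Icc 1 (2*k-1), |a l| ≤ 1)
    {u : ℂ → ℝ} (hsol : SolWithData u (pData k a))
    (hpos : ∀ z : ℂ, z.im = 0 → u z ≠ 0) : False := by
  obtain ⟨htos, C, hC⟩ := hsol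
  have hu : Continuous u := cont_of_sol htos
  have hs0pos : (0:ℝ) < 2*(k:ℝ) - 1/2 := s0_pos hk
  have hk1 : (1:ℝ) ≤ (k:ℝ) := by exact_mod_cast hk
  have hπ := Real.pi_pos
  -- u is harmonic everywhere
  have hharm : ∀ ρ : ℝ, 0 < ρ → circAvg u 0 ρ = u 0 := by
    intro ρ hρ
    have h := (htos (ρ+1) (by linarith)).2.2.2.2
    have hset : {z : ℂ | z.im = 0 ∧ u z = 0} = (∅ : Set ℂ) := by
      ext z
      simp only [Set.mem_setOf_eq, Set.mem_empty_iff_false, iff_false, not_and]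
      exact fun him => hpos z him
    rw [hset, Set.diff_empty] at h
    exact h.2 0 ρ hρ (closedBall_subset_ball (by linarith))
  -- circle averages of p are bounded below
  have hclose : ∀ ρ : ℝ, 0 < ρ → u 0 - C ≤ circAvg (pData k a) 0 ρ := by
    intro ρ hρ
    have h := circAvg_close (u := u) (v := pData k a) hC (y := 0) (ρ := ρ)
      (II_of_cont hu 0 ρ) (II_pData hk a hρ 0 (2*Real.pi))
    rw [hharm ρ hρ] at h
    have h2 := (abs_le.1 h).2
    linarith
  -- but circle averages of p tend to -∞
  have hub : ∀ ρ : ℝ, 1 ≤ ρ → circAvg (pData k a) 0 ρ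
      ≤ ρ ^ ((2*(k:ℝ)-1/2) - 1) * (-(ρ/(Real.pi*(2*(k:ℝ)-1/2))) + 4*(k:ℝ)/Real.pi) := by
    intro ρ hρ1
    have hρ : (0:ℝ) < ρ := lt_of_lt_of_le one_pos hρ1
    rw [circAvg_pData hk a hρ, circAvg_us hs0pos hρ, sin_s0 hk]
    have hsum : ∑ l ∈ Finset.Icc 1 (2*k-1), a l * circAvg (us (2*(k:ℝ)-1/2-(l:ℝ))) 0 ρ
        ≤ (2*(k:ℝ)) * (ρ ^ ((2*(k:ℝ)-1/2) - 1) * (2/Real.pi)) := by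
      have hcard : (Finset.Icc 1 (2*k-1)).card = 2*k-1 := by
        rw [Nat.card_Icc]; omega
      have hbd : ∀ l ∈ Finset.Icc 1 (2*k-1),
          a l * circAvg (us (2*(k:ℝ)-1/2-(l:ℝ))) 0 ρ
            ≤ ρ ^ ((2*(k:ℝ)-1/2) - 1) * (2/Real.pi) := by
        intro l hl
        obtain ⟨hsl1, hsl2⟩ := sl_bounds hk hl
        have hslpos : (0:ℝ) < 2*(k:ℝ)-1/2-(l:ℝ) := by linarith
        rw [circAvg_us hslpos hρ]
        have hrnn : (0:ℝ) ≤ ρ ^ (2*(k:ℝ)-1/2-(l:ℝ)) := Real.rpow_nonneg hρ.le _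
        have hrle : ρ ^ (2*(k:ℝ)-1/2-(l:ℝ)) ≤ ρ ^ ((2*(k:ℝ)-1/2) - 1) :=
          Real.rpow_le_rpow_of_exponent_le hρ1 (by linarith)
        have hal : |a l| ≤ 1 := ha l hl
        have hsin := abs_sin_le_one ((2*(k:ℝ)-1/2-(l:ℝ)) * Real.pi)
        have h0 : a l * (ρ ^ (2*(k:ℝ)-1/2-(l:ℝ)) *
            Real.sin ((2*(k:ℝ)-1/2-(l:ℝ)) * Real.pi) / (Real.pi*(2*(k:ℝ)-1/2-(l:ℝ))))
            ≤ |a l * (ρ ^ (2*(k:ℝ)-1/2-(l:ℝ)) *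
              Real.sin ((2*(k:ℝ)-1/2-(l:ℝ)) * Real.pi) / (Real.pi*(2*(k:ℝ)-1/2-(l:ℝ))))| :=
          le_abs_self _
        have h1 : |a l * (ρ ^ (2*(k:ℝ)-1/2-(l:ℝ)) *
            Real.sin ((2*(k:ℝ)-1/2-(l:ℝ)) * Real.pi) / (Real.pi*(2*(k:ℝ)-1/2-(l:ℝ))))|
            = |a l| * (ρ ^ (2*(k:ℝ)-1/2-(l:ℝ)) *
              |Real.sin ((2*(k:ℝ)-1/2-(l:ℝ)) * Real.pi)| / (Real.pi*(2*(k:ℝ)-1/2-(l:ℝ)))) := by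
          rw [abs_mul, abs_div, abs_mul, _root_.abs_of_nonneg hrnn,
            _root_.abs_of_pos (by positivity : (0:ℝ) < Real.pi*(2*(k:ℝ)-1/2-(l:ℝ)))]
        have h2 : |a l| * (ρ ^ (2*(k:ℝ)-1/2-(l:ℝ)) *
            |Real.sin ((2*(k:ℝ)-1/2-(l:ℝ)) * Real.pi)| / (Real.pi*(2*(k:ℝ)-1/2-(l:ℝ))))
            ≤ 1 * (ρ ^ ((2*(k:ℝ)-1/2) - 1) * 1 / (Real.pi*(1/2))) := by
          gcongr
          all_goals first
            | exact hρ.le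
            | linarith
        have h3 : 1 * (ρ ^ ((2*(k:ℝ)-1/2) - 1) * 1 / (Real.pi*(1/2)))
            = ρ ^ ((2*(k:ℝ)-1/2) - 1) * (2/Real.pi) := by
          field_simp
        linarith
      have := Finset.sum_le_card_nsmul _ _ _ hbd
      rw [hcard] at this
      have hcast : ((2*k-1 : ℕ) : ℝ) ≤ 2*(k:ℝ) := by
        have : ((2*k-1 : ℕ) : ℝ) = 2*(k:ℝ) - 1 := by
          rw [Nat.cast_sub (by omega)]; push_cast; ring
        linarith [this]
      have hnn : (0:ℝ) ≤ ρ ^ ((2*(k:ℝ)-1/2) - 1) * (2/Real.pi) := by positivity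
      calc ∑ l ∈ Finset.Icc 1 (2*k-1), a l * circAvg (us (2*(k:ℝ)-1/2-(l:ℝ))) 0 ρ
          ≤ (2*k-1 : ℕ) • (ρ ^ ((2*(k:ℝ)-1/2) - 1) * (2/Real.pi)) := this
        _ = ((2*k-1 : ℕ) : ℝ) * (ρ ^ ((2*(k:ℝ)-1/2) - 1) * (2/Real.pi)) := by
            rw [nsmul_eq_mul]
        _ ≤ (2*(k:ℝ)) * (ρ ^ ((2*(k:ℝ)-1/2) - 1) * (2/Real.pi)) := by
            exact mul_le_mul_of_nonneg_right hcast hnn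
    have hsplit : ρ ^ (2*(k:ℝ)-1/2) = ρ ^ ((2*(k:ℝ)-1/2) - 1) * ρ := by
      rw [show ρ ^ ((2*(k:ℝ)-1/2) - 1) * ρ = ρ ^ ((2*(k:ℝ)-1/2) - 1) * ρ ^ (1:ℝ) by
        rw [Real.rpow_one], ← Real.rpow_add hρ]
      norm_num
    have hhead : ρ ^ (2*(k:ℝ)-1/2) * (-1) / (Real.pi*(2*(k:ℝ)-1/2))
        = ρ ^ ((2*(k:ℝ)-1/2) - 1) * (-(ρ/(Real.pi*(2*(k:ℝ)-1/2)))) := by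
      rw [hsplit]; field_simp
    rw [hhead]
    have : (2*(k:ℝ)) * (ρ ^ ((2*(k:ℝ)-1/2) - 1) * (2/Real.pi))
        = ρ ^ ((2*(k:ℝ)-1/2) - 1) * (4*(k:ℝ)/Real.pi) := by ring
    rw [this] at hsum
    linarith [hsum, mul_add (ρ ^ ((2*(k:ℝ)-1/2) - 1))
      (-(ρ/(Real.pi*(2*(k:ℝ)-1/2)))) (4*(k:ℝ)/Real.pi)]
  -- choose ρ large and derive the contradiction
  set ρ : ℝ := max 1 (Real.pi*(2*(k:ℝ)-1/2)*(4*(k:ℝ)/Real.pi + |u 0| + C + 1)) with hρdef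
  have hρ1 : (1:ℝ) ≤ ρ := le_max_left _ _
  have hρpos : (0:ℝ) < ρ := lt_of_lt_of_le one_pos hρ1
  have hρ2 : Real.pi*(2*(k:ℝ)-1/2)*(4*(k:ℝ)/Real.pi + |u 0| + C + 1) ≤ ρ := le_max_right _ _
  have h6 : -(ρ/(Real.pi*(2*(k:ℝ)-1/2))) + 4*(k:ℝ)/Real.pi ≤ -(|u 0| + C + 1) := by
    have hd : (0:ℝ) < Real.pi*(2*(k:ℝ)-1/2) := by positivity
    have hX : 4*(k:ℝ)/Real.pi + |u 0| + C + 1 ≤ ρ/(Real.pi*(2*(k:ℝ)-1/2)) := by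
      rw [le_div_iff₀ hd]
      calc (4*(k:ℝ)/Real.pi + |u 0| + C + 1) * (Real.pi*(2*(k:ℝ)-1/2))
          = Real.pi*(2*(k:ℝ)-1/2)*(4*(k:ℝ)/Real.pi + |u 0| + C + 1) := by ring
        _ ≤ ρ := hρ2
    linarith
  have hCnn : (0:ℝ) ≤ C := le_trans (abs_nonneg _) (hC 0)
  have hge1 : (1:ℝ) ≤ ρ ^ ((2*(k:ℝ)-1/2) - 1) := Real.one_le_rpow hρ1 (by linarith)
  have h8 : ρ ^ ((2*(k:ℝ)-1/2) - 1) * (-(ρ/(Real.pi*(2*(k:ℝ)-1/2))) + 4*(k:ℝ)/Real.pi)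
      ≤ -(|u 0| + C + 1) := by
    have hnn : (0:ℝ) ≤ ρ ^ ((2*(k:ℝ)-1/2) - 1) := by linarith
    have hstep := mul_le_mul_of_nonneg_left h6 hnn
    have habs := abs_nonneg (u 0)
    nlinarith [hstep, hge1, habs, hCnn]
  have h9 := hclose ρ hρpos
  have h10 := hub ρ hρ1
  have h11 := neg_abs_le (u 0)
  linarith

/-- locally sub-mean-value property -/
def LocSub (m : ℂ → ℝ) : Prop :=
  ∀ y : ℂ, ∃ ε : ℝ, 0 < ε ∧ ∀ ρ : ℝ, 0 < ρ → ρ ≤ ε → m y ≤ circAvg m y ρ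

lemma circAvg_const_mul {g : ℂ → ℝ} (c : ℝ) (y : ℂ) (ρ : ℝ) :
    circAvg (fun z => c * g z) y ρ = c * circAvg g y ρ := by
  unfold circAvg
  rw [intervalIntegral.integral_const_mul]
  ring

lemma global_max {m : ℂ → ℝ} (hm : Continuous m) (hsub : LocSub m) {s : ℝ} {y0 : ℂ}
    (hy0 : m y0 = s) (hub : ∀ z, m z ≤ s) : ∀ z, m z = s := by
  have hA : IsClopen {z : ℂ | m z = s} := by
    constructor
    · exact isClosed_eq hm continuous_const
    · rw [Metric.isOpen_iff]
      intro y hy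
      obtain ⟨ε, hε, hloc⟩ := hsub y
      refine ⟨ε, hε, ?_⟩
      intro z hz
      rcases eq_or_ne z y with rfl | hne
      · exact hy
      · have hρpos : 0 < dist z y := dist_pos.2 hne
        have hρle : dist z y ≤ ε := le_of_lt hz
        have havg : s ≤ circAvg m y (dist z y) := by
          have := hloc (dist z y) hρpos hρle
          rw [hy] at this; exact this
        have heq := circle_eq_of_avg_ge hm hρpos
          (fun w _ => hub w) havg
        exact heq z (mem_sphere.2 rfl)
  have := hA.eq_univ ⟨y0, hy0⟩
  intro z
  have hz : z ∈ {z : ℂ | m z = s} := by rw [this]; trivial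
  exact hz

lemma liouville {m : ℂ → ℝ} (hm : Continuous m) (hnn : ∀ z, 0 ≤ m z) {M : ℝ}
    (hM : ∀ z, m z ≤ M) (hsub : LocSub m) : ∀ z w : ℂ, m z = m w := by
  obtain ⟨y0, hy0mem, hy0max⟩ := (isCompact_closedBall (0:ℂ) 1).exists_isMaxOn
    ⟨0, by simp⟩ hm.continuousOn
  -- key estimate: for every x outside the unit ball and every ε > 0,
  -- m x ≤ m y0 + ε log |x|
  have key : ∀ x : ℂ, 1 < ‖x‖ → ∀ ε : ℝ, 0 < ε →
      m x ≤ m y0 + ε * Real.log (‖x‖) := by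
    intro x hx ε hε
    set R : ℝ := max (‖x‖ + 1)
      (Real.exp ((M + ε * Real.log (‖x‖) - m x)/ε + 1)) with hRdef
    have hR1 : ‖x‖ + 1 ≤ R := le_max_left _ _
    have hR2 : Real.exp ((M + ε * Real.log (‖x‖) - m x)/ε + 1) ≤ R := le_max_right _ _
    have hRgt : 1 < R := by linarith
    have hRlog : (M + ε * Real.log (‖x‖) - m x)/ε + 1 ≤ Real.log R := by
      rwa [Real.le_log_iff_exp_le (lt_of_lt_of_le (Real.exp_pos _) hR2)]
    set K : Set ℂ := closedBall (0:ℂ) R \ ball 0 1 with hKdef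
    have hK : IsCompact K := (isCompact_closedBall 0 R).diff isOpen_ball
    have hmemK : ∀ z : ℂ, 1 ≤ ‖z‖ → ‖z‖ ≤ R → z ∈ K := by
      intro z h1 h2
      constructor
      · rwa [mem_closedBall_zero_iff]
      · rw [mem_ball_zero_iff]; push_neg; exact h1
    have hxK : x ∈ K := hmemK x hx.le (by linarith)
    have hKbound : ∀ z ∈ K, 1 ≤ ‖z‖ ∧ ‖z‖ ≤ R := by
      intro z hz
      obtain ⟨h1, h2⟩ := hz
      rw [mem_closedBall_zero_iff] at h1
      rw [mem_ball_zero_iff] at h2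
      push_neg at h2
      exact ⟨h2, h1⟩
    set H : ℂ → ℝ := fun z => m z - ε * Hlog z with hHdef
    have hHc : Continuous H := hm.sub (continuous_const.mul Hlog_cont)
    obtain ⟨ys, hysK, hysmax⟩ := hK.exists_isMaxOn ⟨x, hxK⟩ hHc.continuousOn
    set c : ℝ := H ys with hcdef
    set S : Set ℂ := {z | z ∈ K ∧ H z = c} with hSdef
    have hScl : IsClosed S := by
      have h1 : IsClosed K := isClosed_closedBall.sdiff isOpen_ball
      have h2 : IsClosed {z : ℂ | H z = c} := isClosed_eq hHc continuous_const
      exact h1.inter h2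
    have hSsub : S ⊆ K := fun z hz => hz.1
    have hSc : IsCompact S := hK.of_isClosed_subset hScl hSsub
    obtain ⟨y1, hy1S, hy1max⟩ := hSc.exists_isMaxOn ⟨ys, ⟨hysK, rfl⟩⟩
      continuous_norm.continuousOn
    obtain ⟨hy1K, hy1c⟩ := hy1S
    obtain ⟨hy1lb, hy1ub⟩ := hKbound y1 hy1K
    -- y1 must be on the boundary
    have hbdry : ‖y1‖ = 1 ∨ ‖y1‖ = R := by
      by_contra hcon
      push_neg at hcon
      have h1 : 1 < ‖y1‖ := lt_of_le_of_ne hy1lb (Ne.symm hcon.1)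
      have h2 : ‖y1‖ < R := lt_of_le_of_ne hy1ub hcon.2
      obtain ⟨ε1, hε1, hloc⟩ := hsub y1
      set ρ : ℝ := min (min ε1 ((‖y1‖ - 1)/2)) ((R - ‖y1‖)/2) with hρdef
      have hρpos : 0 < ρ := by
        apply lt_min (lt_min hε1 (by linarith)) (by linarith)
      have hρ1 : ρ ≤ ε1 := le_trans (min_le_left _ _) (min_le_left _ _)
      have hρ2 : ρ ≤ (‖y1‖ - 1)/2 := le_trans (min_le_left _ _) (min_le_right _ _)
      have hρ3 : ρ ≤ (R - ‖y1‖)/2 := min_le_right _ _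
      -- the closed disc stays within the open annulus
      have hdisc : ∀ z ∈ closedBall y1 ρ, 1 < ‖z‖ ∧ ‖z‖ < R := by
        intro z hz
        rw [mem_closedBall, Complex.dist_eq] at hz
        have hlow : ‖y1‖ - ‖z‖ ≤ ‖y1 - z‖ := by
          have := norm_sub_norm_le y1 z
          simpa using this
        have hup : ‖z‖ - ‖y1‖ ≤ ‖z - y1‖ := by
          have := norm_sub_norm_le z y1
          simpa using this
        have habs : ‖y1 - z‖ = ‖z - y1‖ := norm_sub_rev y1 z
        constructor
        · nlinarith [hz, hlow, habs]
        · nlinarith [hz, hup]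
      -- circle average of H
      have hair : circAvg Hlog y1 ρ = Real.log (‖y1‖) :=
        circAvg_Hlog y1 hρpos (by linarith)
      have hcavg : circAvg H y1 ρ = circAvg m y1 ρ - ε * circAvg Hlog y1 ρ := by
        have h1 : circAvg H y1 ρ
            = circAvg m y1 ρ - circAvg (fun z => ε * Hlog z) y1 ρ :=
          circAvg_sub (II_of_cont hm y1 ρ)
            (II_of_cont (continuous_const.mul Hlog_cont) y1 ρ)
        rw [h1, circAvg_const_mul]
      have havg : c ≤ circAvg H y1 ρ := by
        rw [hcavg, hair, ← hy1c]
        have := hloc ρ hρpos hρ1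
        have hH1 : H y1 = m y1 - ε * Real.log (‖y1‖) := by
          rw [hHdef]; simp only []
          rw [Hlog_eq (by linarith : 1/2 < ‖y1‖)]
        rw [hH1]
        linarith
      have hle : ∀ z ∈ sphere y1 ρ, H z ≤ c := by
        intro z hz
        have hz' : z ∈ closedBall y1 ρ := sphere_subset_closedBall hz
        obtain ⟨ha1, ha2⟩ := hdisc z hz'
        exact hysmax (hmemK z ha1.le ha2.le)
      have heq := circle_eq_of_avg_ge hHc hρpos hle havg
      -- the outward point of the sphere
      have hy1ne : y1 ≠ 0 := by
        intro h; rw [h] at h1; simp at h1; linarith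
      set zp : ℂ := y1 + (ρ : ℂ) * (y1 / (‖y1‖ : ℂ)) with hzpdef
      have habs_unit : ‖y1 / (‖y1‖ : ℂ)‖ = 1 := by
        rw [norm_div, Complex.norm_real, Real.norm_eq_abs, _root_.abs_of_pos (by linarith : (0:ℝ) < ‖y1‖)]
        field_simp
      have hzp_sphere : zp ∈ sphere y1 ρ := by
        rw [mem_sphere_iff_norm, hzpdef]
        have : y1 + (ρ : ℂ) * (y1 / (‖y1‖ : ℂ)) - y1
            = (ρ : ℂ) * (y1 / (‖y1‖ : ℂ)) := by ring
        rw [this]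
        rw [show ‖(ρ : ℂ) * (y1 / (‖y1‖ : ℂ))‖
            = ‖(ρ : ℂ) * (y1 / (‖y1‖ : ℂ))‖ from rfl]
        rw [norm_mul, habs_unit, Complex.norm_real, Real.norm_eq_abs, _root_.abs_of_pos hρpos, mul_one]
      have hzp_abs : ‖zp‖ = ‖y1‖ + ρ := by
        have hfact : zp = y1 * (((1 + ρ / ‖y1‖ : ℝ)) : ℂ) := by
          rw [hzpdef]
          push_cast
          field_simp
        rw [hfact, norm_mul, Complex.norm_real, Real.norm_eq_abs]
        rw [_root_.abs_of_pos (by positivity : (0:ℝ) < 1 + ρ / ‖y1‖)]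
        field_simp
      have hzpK : zp ∈ K := by
        obtain ⟨hb1, hb2⟩ := hdisc zp (sphere_subset_closedBall hzp_sphere)
        exact hmemK zp hb1.le hb2.le
      have hzpS : zp ∈ S := ⟨hzpK, heq zp hzp_sphere⟩
      have hle2 : ‖zp‖ ≤ ‖y1‖ := hy1max hzpS
      rw [hzp_abs] at hle2
      linarith
    -- case |y1| = R is impossible
    have hHxc : H x ≤ c := hysmax hxK
    rcases hbdry with hb1 | hbR
    · -- |y1| = 1 : conclude
      have hc : c = m y1 := by
        rw [← hy1c, hHdef]
        simp only []
        rw [Hlog_eq (by rw [hb1]; norm_num), hb1, Real.log_one]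
        ring
      have hy1ball : y1 ∈ closedBall (0:ℂ) 1 := by
        rw [mem_closedBall_zero_iff]
        rw [show ‖y1‖ = ‖y1‖ from rfl, hb1]
      have hm1 : m y1 ≤ m y0 := hy0max hy1ball
      have hHx : H x = m x - ε * Real.log (‖x‖) := by
        rw [hHdef]; simp only []
        rw [Hlog_eq (by linarith : 1/2 < ‖x‖)]
      rw [hHx, hc] at hHxc
      linarith
    · -- |y1| = R : contradiction with choice of R
      exfalso
      have hc : c ≤ M - ε * Real.log R := by
        rw [← hy1c, hHdef]
        simp only []
        rw [Hlog_eq (by rw [hbR]; linarith : 1/2 < ‖y1‖), hbR]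
        linarith [hM y1]
      have hHx : H x = m x - ε * Real.log (‖x‖) := by
        rw [hHdef]; simp only []
        rw [Hlog_eq (by linarith : 1/2 < ‖x‖)]
      rw [hHx] at hHxc
      have : ε * ((M + ε * Real.log (‖x‖) - m x)/ε + 1) ≤ ε * Real.log R :=
        mul_le_mul_of_nonneg_left hRlog hε.le
      rw [mul_add, mul_div_cancel₀ _ hε.ne', mul_one] at this
      linarith
  -- conclude m x ≤ m y0 for all x
  have hub : ∀ x : ℂ, m x ≤ m y0 := by
    intro x
    rcases le_or_gt (‖x‖) 1 with hx | hx
    · exact hy0max (by rwa [mem_closedBall_zero_iff])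
    · by_contra hcon
      push_neg at hcon
      set δ : ℝ := m x - m y0 with hδdef
      have hδ : 0 < δ := by linarith
      have hlogpos : 0 ≤ Real.log (‖x‖) := Real.log_nonneg hx.le
      have := key x hx (δ / (2 * (Real.log (‖x‖) + 1)))
        (by positivity)
      have h2 : δ / (2 * (Real.log (‖x‖) + 1)) * Real.log (‖x‖) < δ := by
        rw [div_mul_eq_mul_div, div_lt_iff₀ (by positivity)]
        nlinarith
      linarith
  exact fun z w => by
    rw [global_max hm hsub rfl hub z, global_max hm hsub rfl hub w]

lemma max_locsub {u1 u2 : ℂ → ℝ} (h1 : IsTOSR2 u1) (h2 : IsTOSR2 u2) :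
    LocSub (fun z => max (u1 z - u2 z) 0) := by
  have hu1 : Continuous u1 := cont_of_sol h1
  have hu2 : Continuous u2 := cont_of_sol h2
  have hmc : Continuous (fun z => max (u1 z - u2 z) 0) :=
    (hu1.sub hu2).max continuous_const
  intro y
  by_cases hcase : u2 y < u1 y
  · -- y is away from the contact set of u1
    have hy_not : y ∉ {z : ℂ | z.im = 0 ∧ u1 z = 0} := by
      intro hmem
      obtain ⟨him, hval⟩ := hmem
      have hball : y ∈ ball (0:ℂ) (‖y‖ + 1) := by
        rw [mem_ball_zero_iff]
        have : ‖y‖ = ‖y‖ := rfl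
        rw [this]; linarith [norm_nonneg y]
      have h0 : 0 ≤ u2 y := (h2 (‖y‖ + 1) (by positivity)).2.2.2.1 y hball him
      rw [hval] at hcase
      linarith
    have hclosed : IsClosed {z : ℂ | z.im = 0 ∧ u1 z = 0} := by
      have : {z : ℂ | z.im = 0 ∧ u1 z = 0} = {z : ℂ | z.im = 0} ∩ {z : ℂ | u1 z = 0} := by
        ext z; simp [Set.mem_inter_iff]
      rw [this]
      exact (isClosed_eq Complex.continuous_im continuous_const).inter
        (isClosed_eq hu1 continuous_const)
    obtain ⟨ε0, hε0, hball0⟩ := Metric.isOpen_iff.1 hclosed.isOpen_compl y hy_not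
    refine ⟨ε0/2, by linarith, ?_⟩
    intro ρ hρ hρle
    set R : ℝ := ‖y‖ + ε0 + 1 with hRdef
    have hRpos : 0 < R := by positivity
    have hsubball : closedBall y ρ ⊆ ball 0 R := by
      intro z hz
      rw [mem_closedBall] at hz
      rw [mem_ball]
      calc dist z 0 ≤ dist z y + dist y 0 := dist_triangle _ _ _
        _ ≤ ρ + ‖y‖ := by
            have hd : dist y 0 = ‖y‖ := by rw [Complex.dist_eq, sub_zero]
            rw [hd]
            exact add_le_add hz le_rfl
        _ < R := by rw [hRdef]; linarith
    have hsub1 : closedBall y ρ ⊆ ball 0 R \ {z : ℂ | z.im = 0 ∧ u1 z = 0} := by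
      intro z hz
      refine ⟨hsubball hz, ?_⟩
      have : z ∈ ball y ε0 := by
        rw [mem_ball]
        rw [mem_closedBall] at hz
        linarith
      exact hball0 this
    have harm1 : circAvg u1 y ρ = u1 y :=
      ((h1 R hRpos).2.2.2.2).2 y ρ hρ hsub1
    have hsuper2 : circAvg u2 y ρ ≤ u2 y :=
      (h2 R hRpos).2.2.1 y ρ hρ hsubball
    have hmono : circAvg (fun z => u1 z - u2 z) y ρ
        ≤ circAvg (fun z => max (u1 z - u2 z) 0) y ρ :=
      circAvg_mono (fun z => le_max_left _ _)
        (II_of_cont (hu1.sub hu2) y ρ) (II_of_cont hmc y ρ)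
    have hsubeq : circAvg (fun z => u1 z - u2 z) y ρ = circAvg u1 y ρ - circAvg u2 y ρ :=
      circAvg_sub (II_of_cont hu1 y ρ) (II_of_cont hu2 y ρ)
    have hmy : max (u1 y - u2 y) 0 = u1 y - u2 y :=
      max_eq_left (by linarith)
    show max (u1 y - u2 y) 0 ≤ circAvg (fun z => max (u1 z - u2 z) 0) y ρ
    rw [hmy]
    rw [hsubeq, harm1] at hmono
    linarith
  · refine ⟨1, one_pos, ?_⟩
    intro ρ hρ _
    push_neg at hcase
    have hmy : max (u1 y - u2 y) 0 = 0 := max_eq_right (by linarith)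
    show max (u1 y - u2 y) 0 ≤ circAvg (fun z => max (u1 z - u2 z) 0) y ρ
    rw [hmy]
    exact circAvg_nonneg (fun z => le_max_right _ _)

/-- one-sided comparison: if both are solutions with data `p` then `u1 ≤ u2`. -/
lemma one_sided {k : ℕ} (hk : 1 ≤ k) {a : ℕ → ℝ}
    (ha : ∀ l ∈ Finset.Icc 1 (2*k-1), |a l| ≤ 1)
    {u1 u2 : ℂ → ℝ}
    (h1 : SolWithData u1 (pData k a)) (h2 : SolWithData u2 (pData k a)) :
    ∀ z : ℂ, u1 z ≤ u2 z := by
  obtain ⟨ht1, C1, hC1⟩ := h1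
  obtain ⟨ht2, C2, hC2⟩ := h2
  have hu1 : Continuous u1 := cont_of_sol ht1
  have hu2 : Continuous u2 := cont_of_sol ht2
  set m : ℂ → ℝ := fun z => max (u1 z - u2 z) 0 with hmdef
  have hmc : Continuous m := (hu1.sub hu2).max continuous_const
  have hnn : ∀ z, 0 ≤ m z := fun z => le_max_right _ _
  have hM : ∀ z, m z ≤ C1 + C2 := by
    intro z
    have hb1 := abs_le.1 (hC1 z)
    have hb2 := abs_le.1 (hC2 z)
    have hC1nn : 0 ≤ C1 := le_trans (abs_nonneg _) (hC1 0)
    have hC2nn : 0 ≤ C2 := le_trans (abs_nonneg _) (hC2 0)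
    apply max_le _ (by linarith)
    linarith [hb1.2, hb2.1]
  have hconst := liouville hmc hnn hM (max_locsub ht1 ht2)
  intro z
  by_contra hcon
  push_neg at hcon
  -- m is the positive constant c everywhere
  set c : ℝ := m z with hcdef
  have hcpos : 0 < c := by
    rw [hcdef, hmdef]
    simp only []
    rw [max_eq_left (by linarith)]
    linarith
  have hall : ∀ w : ℂ, u1 w - u2 w = c := by
    intro w
    have h := hconst w z
    have : m w = c := h
    rw [hmdef] at this
    simp only [] at this
    rcases le_or_gt (u1 w - u2 w) 0 with hle | hlt
    · rw [max_eq_right hle] at this; linarith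
    · rwa [max_eq_left hlt.le] at this
  -- then u1 > 0 on the line, contradiction
  have hpos : ∀ w : ℂ, w.im = 0 → u1 w ≠ 0 := by
    intro w him
    have hball : w ∈ ball (0:ℂ) (‖w‖ + 1) := by
      rw [mem_ball_zero_iff]
      have : ‖w‖ = ‖w‖ := rfl
      rw [this]; linarith [norm_nonneg w]
    have h0 : 0 ≤ u2 w := (ht2 (‖w‖ + 1) (by positivity)).2.2.2.1 w hball him
    have := hall w
    intro heq
    rw [heq] at this
    linarith
  exact absurd (no_positive_sol hk ha ⟨ht1, C1, hC1⟩ hpos) (fun h => h)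

end TOP

/-- Uniqueness: two solutions with the same data `p` at infinity coincide. -/
theorem statement1 (k : ℕ) (hk : 1 ≤ k) (a : ℕ → ℝ)
    (ha : ∀ l ∈ Finset.Icc 1 (2*k-1), |a l| ≤ 1)
    (u1 u2 : ℂ → ℝ)
    (h1 : SolWithData u1 (pData k a)) (h2 : SolWithData u2 (pData k a)) :
    u1 = u2 := by
  funext z
  exact le_antisymm (TOP.one_sided hk ha h1 h2 z) (TOP.one_sided hk ha h2 h1 z)
end
end

section
/- (Comparison with a slit-harmonic function.) Let R>0. Let v be a continuous function on the closed ball of radius R centered at 0 in ℝ², even with respect to x₂, harmonic on B_R∖S, and vanishing on S∩B_R. Let u be a solution to the thin obstacle problem in B_R that extends continuously to the closed ball, and suppose u ≥ v on ∂B_R. Then u ≥ v everywhere in B_R. -/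
noncomputable section

open Complex MeasureTheory Metric

/-- Comparison with a slit-harmonic function: if a solution `u` of the thin obstacle
problem in `B_R` dominates a slit-harmonic `v` on `∂B_R`, then `u ≥ v` in `B_R`. -/
theorem statement14 (R : ℝ) (hR : 0 < R) (v u : ℂ → ℝ)
    (hvc : ContinuousOn v (closedBall 0 R))
    (hve : ∀ z ∈ closedBall (0:ℂ) R, (starRingEnd ℂ) z ∈ closedBall (0:ℂ) R →
      v ((starRingEnd ℂ) z) = v z)
    (hvh : IsHarmOn v (ball 0 R \ Slit))
    (hv0 : ∀ z ∈ Slit ∩ ball (0:ℂ) R, v z = 0)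
    (hu : IsTOS u (ball 0 R))
    (huc : ContinuousOn u (closedBall 0 R))
    (hbd : ∀ z ∈ sphere (0:ℂ) R, v z ≤ u z) :
    ∀ z ∈ ball (0:ℂ) R, v z ≤ u z := by
  classical
  have hKc : IsCompact (closedBall (0:ℂ) R) := isCompact_closedBall 0 R
  have hKne : (closedBall (0:ℂ) R).Nonempty := ⟨0, by simp [hR.le]⟩
  set w : ℂ → ℝ := fun z => u z - v z with hwdef
  have hwc : ContinuousOn w (closedBall 0 R) := huc.sub hvc
  obtain ⟨z₀, hz₀K, hz₀min⟩ := hKc.exists_isMinOn hKne hwc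
  set m := w z₀ with hmdef
  have hmin : ∀ z ∈ closedBall (0:ℂ) R, m ≤ w z := fun z hz => hz₀min hz
  rcases le_or_gt 0 m with hm0 | hm0
  · intro z hz
    have h := hmin z (ball_subset_closedBall hz)
    have : (0:ℝ) ≤ u z - v z := le_trans hm0 h
    linarith
  · exfalso
    -- the "bad set" E : slit plus complement of the ball
    set E : Set ℂ := Slit ∪ (ball (0:ℂ) R)ᶜ with hEdef
    have hSlitClosed : IsClosed Slit := by
      have : Slit = {z : ℂ | z.im = 0} ∩ {z : ℂ | z.re ≤ 0} := rfl
      rw [this]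
      exact (isClosed_eq Complex.continuous_im continuous_const).inter
        (isClosed_le Complex.continuous_re continuous_const)
    have hEclosed : IsClosed E := hSlitClosed.union isOpen_ball.isClosed_compl
    have hEne : E.Nonempty := ⟨0, Or.inl ⟨rfl, le_refl 0⟩⟩
    -- points of the minimum set avoid E
    have hwE : ∀ z ∈ closedBall (0:ℂ) R, z ∈ E → 0 ≤ w z := by
      intro z hzK hzE
      rcases hzE with hzS | hzB
      · rcases lt_or_eq_of_le (mem_closedBall.mp hzK) with hlt | heq
        · have hzball : z ∈ ball (0:ℂ) R := mem_ball.mpr hlt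
          have hu0 : 0 ≤ u z := hu.2.2.2.1 z hzball hzS.1
          have hv0' : v z = 0 := hv0 z ⟨hzS, hzball⟩
          simp only [hwdef, hv0']
          linarith
        · have : z ∈ sphere (0:ℂ) R := mem_sphere.mpr heq
          have := hbd z this
          simp only [hwdef]; linarith
      · have : z ∈ sphere (0:ℂ) R := mem_sphere.mpr
          (le_antisymm (mem_closedBall.mp hzK) (not_lt.mp (fun h => hzB (mem_ball.mpr h))))
        have := hbd z this
        simp only [hwdef]; linarith
    -- the minimum set A
    set A : Set ℂ := closedBall (0:ℂ) R ∩ w ⁻¹' {m} with hAdef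
    have hAclosed : IsClosed A :=
      hwc.preimage_isClosed_of_isClosed isClosed_closedBall isClosed_singleton
    have hAcomp : IsCompact A := hKc.of_isClosed_subset hAclosed Set.inter_subset_left
    have hAne : A.Nonempty := ⟨z₀, hz₀K, rfl⟩
    have hAnotE : ∀ z ∈ A, z ∉ E := by
      intro z hz hzE
      have := hwE z hz.1 hzE
      have hzm : w z = m := hz.2
      rw [hzm] at this
      exact absurd this (not_le.mpr hm0)
    -- pick the point of A closest to E
    obtain ⟨z₁, hz₁A, hz₁min⟩ := hAcomp.exists_isMinOn hAne (continuous_infDist_pt E).continuousOn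
    set d₁ := Metric.infDist z₁ E with hd₁def
    have hd₁pos : 0 < d₁ := (hEclosed.notMem_iff_infDist_pos hEne).mp (hAnotE z₁ hz₁A)
    set ρ := d₁ / 2 with hρdef
    have hρpos : 0 < ρ := by positivity
    -- the closed disc of radius ρ around z₁ avoids E
    have hdisc : ∀ x : ℂ, dist x z₁ ≤ ρ → x ∉ E := by
      intro x hx hxE
      have h1 : d₁ ≤ Metric.infDist x E + dist z₁ x := Metric.infDist_le_infDist_add_dist
      have h2 : Metric.infDist x E = 0 := Metric.infDist_zero_of_mem hxE
      rw [h2, zero_add, dist_comm] at h1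
      linarith
    have hsub : closedBall z₁ ρ ⊆ ball (0:ℂ) R \ Slit := by
      intro x hx
      have hxE := hdisc x (mem_closedBall.mp hx)
      constructor
      · by_contra h
        exact hxE (Or.inr h)
      · intro h
        exact hxE (Or.inl h)
    have hsubball : closedBall z₁ ρ ⊆ ball (0:ℂ) R := fun x hx => (hsub hx).1
    -- nearest point p of E
    obtain ⟨p, hpE, hpd⟩ := hEclosed.exists_infDist_eq_dist hEne z₁
    have hpd' : dist z₁ p = d₁ := hpd.symm
    have hpne : p - z₁ ≠ 0 := by
      intro h
      have : p = z₁ := by linear_combination h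
      rw [this, dist_self] at hpd'
      linarith
    have habs : ‖p - z₁‖ = d₁ := by
      rw [← hpd', dist_comm, Complex.dist_eq]
    -- the circle parametrization
    set c : ℝ → ℂ := fun t => z₁ + (ρ : ℂ) * Complex.exp ((t : ℂ) * Complex.I) with hcdef
    have hcmem : ∀ t : ℝ, c t ∈ closedBall z₁ ρ := by
      intro t
      simp only [hcdef, mem_closedBall, Complex.dist_eq, add_sub_cancel_left, norm_mul,
        Complex.norm_exp_ofReal_mul_I, mul_one, Complex.norm_real, Real.norm_eq_abs, abs_of_pos hρpos, le_refl]
    have hccont : Continuous c := by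
      apply continuous_const.add
      exact continuous_const.mul ((Complex.continuous_ofReal.mul continuous_const).cexp)
    -- angle towards p
    set a := Complex.arg (p - z₁) with hadef
    set t₂ : ℝ := if 0 ≤ a then a else a + 2 * Real.pi with ht₂def
    have hπpos := Real.pi_pos
    have ht₂mem : t₂ ∈ Set.Icc (0:ℝ) (2 * Real.pi) := by
      rcases le_or_gt 0 a with h | h
      · simp only [ht₂def, if_pos h]
        exact ⟨h, le_trans (Complex.arg_le_pi _) (by linarith)⟩
      · simp only [ht₂def, if_neg (not_le.mpr h)]
        have := Complex.neg_pi_lt_arg (p - z₁)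
        constructor <;> [linarith; linarith]
    have hexp : Complex.exp ((t₂ : ℂ) * Complex.I) = Complex.exp ((a : ℂ) * Complex.I) := by
      rcases le_or_gt 0 a with h | h
      · simp [ht₂def, if_pos h]
      · simp only [ht₂def, if_neg (not_le.mpr h)]
        push_cast
        rw [add_mul, Complex.exp_add, Complex.exp_two_pi_mul_I, mul_one]
    have hct₂ : c t₂ = z₁ + ((ρ / d₁ : ℝ) : ℂ) * (p - z₁) := by
      have h1 : ((d₁ : ℝ) : ℂ) * Complex.exp ((a : ℂ) * Complex.I) = p - z₁ := by
        rw [hadef, ← habs]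
        exact Complex.norm_mul_exp_arg_mul_I (p - z₁)
      have hd₁ne : ((d₁ : ℝ) : ℂ) ≠ 0 := by
        simp only [ne_eq, Complex.ofReal_eq_zero]
        linarith
      simp only [hcdef, hexp]
      rw [← h1]
      push_cast
      field_simp
    set z₂ := c t₂ with hz₂def
    have hz₂K : z₂ ∈ closedBall (0:ℂ) R :=
      ball_subset_closedBall (hsubball (hcmem t₂))
    -- z₂ is close to p
    have hz₂p : dist z₂ p = ρ := by
      have hρd : (ρ : ℝ) / d₁ = 1 / 2 := by
        rw [hρdef, div_right_comm, div_self (ne_of_gt hd₁pos)]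
      have : z₂ - p = -(((1:ℝ)/2 : ℝ) : ℂ) * (p - z₁) := by
        rw [hct₂, hρd]
        push_cast
        ring
      rw [Complex.dist_eq, this]
      simp only [norm_mul, norm_neg, Complex.norm_real, Real.norm_eq_abs]
      rw [habs]
      rw [abs_of_pos (by norm_num : (0:ℝ) < 1/2)]
      rw [hρdef]; ring
    have hz₂E : Metric.infDist z₂ E ≤ ρ := by
      rw [← hz₂p]; exact Metric.infDist_le_dist_of_mem hpE
    -- w z₂ > m
    have hwz₂ : m < w z₂ := by
      rcases lt_or_eq_of_le (hmin z₂ hz₂K) with h | h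
      · exact h
      · exfalso
        have hz₂A : z₂ ∈ A := ⟨hz₂K, h.symm⟩
        have := hz₁min hz₂A
        simp only [Set.mem_setOf_eq] at this
        have : d₁ ≤ Metric.infDist z₂ E := this
        rw [hρdef] at hz₂E
        linarith
    -- continuity of the circle restrictions
    have huc' : ContinuousOn (fun t => u (c t)) (Set.Icc 0 (2 * Real.pi)) :=
      huc.comp hccont.continuousOn
        (fun t _ => ball_subset_closedBall (hsubball (hcmem t)))
    have hvc' : ContinuousOn (fun t => v (c t)) (Set.Icc 0 (2 * Real.pi)) :=
      hvc.comp hccont.continuousOn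
        (fun t _ => ball_subset_closedBall (hsubball (hcmem t)))
    have hwc' : ContinuousOn (fun t => w (c t)) (Set.Icc 0 (2 * Real.pi)) := huc'.sub hvc'
    have h2π : (0:ℝ) < 2 * Real.pi := by linarith
    -- the mean value relations
    have hAvgU : circAvg u z₁ ρ ≤ u z₁ := hu.2.2.1 z₁ ρ hρpos hsubball
    have hAvgV : circAvg v z₁ ρ = v z₁ := hvh.2 z₁ ρ hρpos hsub
    have hIu : IntervalIntegrable (fun t => u (c t)) MeasureTheory.volume 0 (2 * Real.pi) :=
      huc'.intervalIntegrable_of_Icc h2π.le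
    have hIv : IntervalIntegrable (fun t => v (c t)) MeasureTheory.volume 0 (2 * Real.pi) :=
      hvc'.intervalIntegrable_of_Icc h2π.le
    -- strict integral inequality
    have hstrict : (∫ t in (0:ℝ)..(2 * Real.pi), m) <
        ∫ t in (0:ℝ)..(2 * Real.pi), w (c t) := by
      apply intervalIntegral.integral_lt_integral_of_continuousOn_of_le_of_exists_lt h2π
        continuousOn_const hwc'
      · intro x _
        exact hmin (c x) (ball_subset_closedBall (hsubball (hcmem x)))
      · exact ⟨t₂, ht₂mem, hwz₂⟩
    have hconst : (∫ t in (0:ℝ)..(2 * Real.pi), m) = 2 * Real.pi * m := by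
      rw [intervalIntegral.integral_const, smul_eq_mul]
      ring
    have hsplit : (∫ t in (0:ℝ)..(2 * Real.pi), w (c t)) =
        (∫ t in (0:ℝ)..(2 * Real.pi), u (c t)) - ∫ t in (0:ℝ)..(2 * Real.pi), v (c t) := by
      rw [← intervalIntegral.integral_sub hIu hIv]
    have hwz₁ : w z₁ = m := hz₁A.2
    have hfinal : circAvg u z₁ ρ - circAvg v z₁ ρ =
        (2 * Real.pi)⁻¹ * ∫ t in (0:ℝ)..(2 * Real.pi), w (c t) := by
      rw [hsplit]
      simp only [circAvg, hcdef]
      ring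
    have h1 : m < (2 * Real.pi)⁻¹ * ∫ t in (0:ℝ)..(2 * Real.pi), w (c t) := by
      rw [hconst] at hstrict
      have h2πinv : (0:ℝ) < (2 * Real.pi)⁻¹ := by positivity
      calc m = (2 * Real.pi)⁻¹ * (2 * Real.pi * m) := by field_simp
        _ < (2 * Real.pi)⁻¹ * ∫ t in (0:ℝ)..(2 * Real.pi), w (c t) := by
            exact (mul_lt_mul_iff_right₀ h2πinv).mpr hstrict
    have h2 : circAvg u z₁ ρ - circAvg v z₁ ρ ≤ m := by
      rw [hAvgV, ← hwz₁]
      simp only [hwdef]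
      linarith
    rw [hfinal] at h2
    linarith
end
end

section
/- (Comparison principle for the thin obstacle problem.) Let R>0 and let u and Q be solutions to the thin obstacle problem in B_R⊂ℝ², both extending continuously to the closed ball of radius R, with u ≤ Q on ∂B_R. Then u ≤ Q everywhere in B_R. -/
noncomputable section

open Complex MeasureTheory Metric

lemma memcb (z : ℂ) (ρ : ℝ) (hρ : 0 ≤ ρ) (t : ℝ) :
    z + (ρ:ℂ) * Complex.exp ((t:ℂ) * Complex.I) ∈ closedBall z ρ := by
  simp [Complex.dist_eq, add_sub_cancel_left, map_mul, Complex.norm_exp_ofReal_mul_I,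
    Complex.norm_real, Real.norm_eq_abs, _root_.abs_of_nonneg hρ]

lemma circlept {z w : ℂ} :
    ∃ t₀ ∈ Set.Icc (0:ℝ) (2*Real.pi),
      z + (↑(dist w z) : ℂ) * Complex.exp ((t₀:ℂ) * Complex.I) = w := by
  set c := w - z with hc
  have hcd : (dist w z : ℂ) = (‖c‖ : ℂ) := by rw [dist_eq_norm]
  have habs : (‖c‖ : ℂ) * Complex.exp ((c.arg : ℂ) * Complex.I) = c :=
    Complex.norm_mul_exp_arg_mul_I c
  have hpi := Real.pi_pos
  rcases le_or_gt 0 c.arg with h | h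
  · refine ⟨c.arg, ⟨h, (Complex.arg_le_pi c).trans (by linarith)⟩, ?_⟩
    rw [hcd, habs, hc]; ring
  · refine ⟨c.arg + 2*Real.pi, ⟨by linarith [Complex.neg_pi_lt_arg c], by
      linarith [Complex.arg_le_pi c]⟩, ?_⟩
    have he : Complex.exp ((↑(c.arg + 2*Real.pi) : ℂ) * Complex.I)
        = Complex.exp ((c.arg : ℂ) * Complex.I) := by
      push_cast
      rw [add_mul, Complex.exp_add, Complex.exp_two_pi_mul_I, mul_one]
    rw [hcd, he, habs, hc]; ring

lemma key (R : ℝ) (hR : 0 < R) (u Q : ℂ → ℝ)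
    (hu : IsTOS u (ball 0 R)) (hQ : IsTOS Q (ball 0 R))
    (huc : ContinuousOn u (closedBall 0 R)) (hQc : ContinuousOn Q (closedBall 0 R))
    (M : ℝ) (hM : 0 < M) (hmax : ∀ w ∈ closedBall (0:ℂ) R, u w - Q w ≤ M)
    (z : ℂ) (hz : z ∈ ball (0:ℂ) R) (hzM : u z - Q z = M) :
    ∃ ρ > 0, ball z ρ ⊆ ball (0:ℂ) R ∧ ∀ w ∈ ball z ρ, u w - Q w = M := by
  obtain ⟨huC, _, _, _, huH⟩ := hu
  obtain ⟨hQC, _, hQsuper, hQpos, _⟩ := hQ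
  have hpi := Real.two_pi_pos
  -- z is not in the contact set of u
  set C : Set ℂ := {w : ℂ | w.im = 0 ∧ u w = 0} with hCdef
  set N : Set ℂ := (ball (0:ℂ) R ∩ {w : ℂ | w.im ≠ 0}) ∪ (ball (0:ℂ) R ∩ u ⁻¹' ({0}ᶜ)) with hN
  have hNopen : IsOpen N := by
    apply IsOpen.union
    · exact isOpen_ball.inter (isOpen_compl_singleton.preimage Complex.continuous_im)
    · exact huC.isOpen_inter_preimage isOpen_ball isOpen_compl_singleton
  have hzN : z ∈ N := by
    by_cases him : z.im = 0
    · right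
      refine ⟨hz, ?_⟩
      have hq0 : 0 ≤ Q z := hQpos z hz him
      simp only [Set.mem_preimage, Set.mem_compl_iff, Set.mem_singleton_iff]
      intro h0
      rw [h0] at hzM; linarith
    · left; exact ⟨hz, him⟩
  have hNsub : N ⊆ ball (0:ℂ) R \ C := by
    rintro w (⟨hw1, hw2⟩ | ⟨hw1, hw2⟩)
    · exact ⟨hw1, fun hwc => hw2 hwc.1⟩
    · exact ⟨hw1, fun hwc => hw2 hwc.2⟩
  obtain ⟨ρ₀, hρ₀, hball⟩ := Metric.isOpen_iff.1 hNopen z hzN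
  refine ⟨ρ₀/2, by linarith, ?_, ?_⟩
  · intro w hw
    exact ((hNsub (hball (ball_subset_ball (by linarith) hw))).1)
  intro w hw
  rcases eq_or_ne w z with rfl | hne
  · exact hzM
  by_contra hlt'
  set ρ' := dist w z with hρ'
  have hρ'pos : 0 < ρ' := dist_pos.2 hne
  have hρ'lt : ρ' < ρ₀/2 := mem_ball.1 hw
  have hsub : closedBall z ρ' ⊆ ball (0:ℂ) R \ C := by
    refine fun x hx => hNsub (hball ?_)
    exact lt_of_le_of_lt (mem_closedBall.1 hx) (by linarith)
  have hsubΩ : closedBall z ρ' ⊆ ball (0:ℂ) R := fun x hx => (hsub hx).1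
  have hsubcb : closedBall z ρ' ⊆ closedBall (0:ℂ) R :=
    fun x hx => ball_subset_closedBall (hsubΩ hx)
  -- harmonicity of u, superharmonicity of Q on this circle
  have hharm : circAvg u z ρ' = u z := huH.2 z ρ' hρ'pos hsub
  have hsup : circAvg Q z ρ' ≤ Q z := hQsuper z ρ' hρ'pos hsubΩ
  set γ : ℝ → ℂ := fun t => z + (ρ' : ℂ) * Complex.exp ((t:ℂ) * Complex.I) with hγ
  have hγmem : ∀ t, γ t ∈ closedBall (0:ℂ) R := fun t => hsubcb (memcb z ρ' hρ'pos.le t)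
  have hγcont : Continuous γ := by fun_prop
  have hucont : Continuous fun t => u (γ t) := huc.comp_continuous hγcont hγmem
  have hQcont : Continuous fun t => Q (γ t) := hQc.comp_continuous hγcont hγmem
  -- the point w is on the circle
  obtain ⟨t₀, ht₀, hγt₀⟩ := circlept (z := z) (w := w)
  have hwM : u w - Q w < M := lt_of_le_of_ne (hmax w (hsubcb (mem_closedBall.2 (le_refl ρ')))) hlt'
  -- strict integral inequality
  have hstrict : (∫ t in (0:ℝ)..(2*Real.pi), u (γ t))
      < ∫ t in (0:ℝ)..(2*Real.pi), (Q (γ t) + M) := by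
    apply intervalIntegral.integral_lt_integral_of_continuousOn_of_le_of_exists_lt hpi
      hucont.continuousOn (hQcont.add continuous_const).continuousOn
    · intro x _
      have := hmax (γ x) (hγmem x)
      simp only [Pi.add_apply]
      linarith
    · refine ⟨t₀, ht₀, ?_⟩
      have : γ t₀ = w := hγt₀
      rw [this]; simp only [Pi.add_apply, this]; linarith
  have hint1 : (∫ t in (0:ℝ)..(2*Real.pi), u (γ t)) = 2 * Real.pi * u z := by
    have := hharm
    unfold circAvg at this
    field_simp at this
    linarith
  have hint2 : (∫ t in (0:ℝ)..(2*Real.pi), Q (γ t)) ≤ 2 * Real.pi * Q z := by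
    have := hsup
    unfold circAvg at this
    rw [inv_mul_le_iff₀ hpi] at this
    linarith
  have hint3 : (∫ t in (0:ℝ)..(2*Real.pi), (Q (γ t) + M))
      = (∫ t in (0:ℝ)..(2*Real.pi), Q (γ t)) + 2 * Real.pi * M := by
    rw [intervalIntegral.integral_add (hQcont.intervalIntegrable _ _) intervalIntegrable_const]
    simp [intervalIntegral.integral_const]
  rw [hint1, hint3] at hstrict
  nlinarith [hstrict, hint2]

/-- Comparison principle for the thin obstacle problem in a ball. -/
theorem statement15 (R : ℝ) (hR : 0 < R) (u Q : ℂ → ℝ)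
    (hu : IsTOS u (ball 0 R)) (hQ : IsTOS Q (ball 0 R))
    (huc : ContinuousOn u (closedBall 0 R)) (hQc : ContinuousOn Q (closedBall 0 R))
    (hbd : ∀ z ∈ sphere (0:ℂ) R, u z ≤ Q z) :
    ∀ z ∈ ball (0:ℂ) R, u z ≤ Q z := by
  have hpconn : IsPreconnected (ball (0:ℂ) R) := (convex_ball (0:ℂ) R).isPreconnected
  obtain ⟨x₀, hx₀mem, hx₀max⟩ := (isCompact_closedBall (0:ℂ) R).exists_isMaxOn
    (nonempty_closedBall.2 hR.le) (huc.sub hQc)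
  set M := u x₀ - Q x₀ with hMdef
  have hmax : ∀ w ∈ closedBall (0:ℂ) R, u w - Q w ≤ M := fun w hw => hx₀max hw
  by_cases hM : M ≤ 0
  · intro z hz
    have := hmax z (ball_subset_closedBall hz); linarith
  push_neg at hM
  exfalso
  have hx₀ball : x₀ ∈ ball (0:ℂ) R := by
    rcases lt_or_eq_of_le (mem_closedBall.1 hx₀mem) with h | h
    · exact mem_ball.2 h
    · exfalso
      have := hbd x₀ (mem_sphere.2 h)
      linarith
  -- u - Q equals M on all of the ball
  have hall : ∀ z ∈ ball (0:ℂ) R, u z - Q z = M := by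
    intro z₁ hz₁
    by_contra hz₁ne
    set U : Set ℂ := interior {w : ℂ | u w - Q w = M} with hU
    set V : Set ℂ := ball (0:ℂ) R ∩ (fun w => u w - Q w) ⁻¹' ({M}ᶜ) with hV
    have hVopen : IsOpen V :=
      (hu.1.sub hQ.1).isOpen_inter_preimage isOpen_ball isOpen_compl_singleton
    have hmemU : ∀ z ∈ ball (0:ℂ) R, u z - Q z = M → z ∈ U := by
      intro z hz h
      obtain ⟨ρ, hρ, hb, hval⟩ := key R hR u Q hu hQ huc hQc M hM hmax z hz h
      exact mem_interior.2 ⟨ball z ρ, fun w hw => hval w hw, isOpen_ball, mem_ball_self hρ⟩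
    have hsub : ball (0:ℂ) R ⊆ U ∪ V := by
      intro z hz
      by_cases h : u z - Q z = M
      · exact Or.inl (hmemU z hz h)
      · exact Or.inr ⟨hz, h⟩
    obtain ⟨y, -, hyU, -, hyV⟩ := hpconn U V isOpen_interior hVopen hsub
      ⟨x₀, hx₀ball, hmemU x₀ hx₀ball rfl⟩ ⟨z₁, hz₁, hz₁, hz₁ne⟩
    have h1 : y ∈ {w : ℂ | u w - Q w = M} := interior_subset hyU
    simp only [Set.mem_setOf_eq] at h1
    simp only [Set.mem_preimage, Set.mem_compl_iff, Set.mem_singleton_iff] at hyV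
    exact hyV h1
  -- boundary contradiction
  set pt : ℂ := (R : ℂ) with hpt
  have hptsph : pt ∈ sphere (0:ℂ) R := by
    simp [hpt, Complex.dist_eq, _root_.abs_of_pos hR]
  have hptcb : pt ∈ closedBall (0:ℂ) R := sphere_subset_closedBall hptsph
  set seq : ℕ → ℂ := fun n => (((1 - 1/((n:ℝ)+1)) * R : ℝ) : ℂ) with hseq
  have hmem : ∀ n, seq n ∈ ball (0:ℂ) R := by
    intro n
    have h1 : 0 < 1/((n:ℝ)+1) := by positivity
    have h2 : 1/((n:ℝ)+1) ≤ 1 := by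
      rw [div_le_one (by positivity)]; linarith [Nat.cast_nonneg (α := ℝ) n]
    simp only [hseq, mem_ball, Complex.dist_eq, sub_zero, Complex.norm_real, Real.norm_eq_abs]
    rw [abs_mul, _root_.abs_of_nonneg (by linarith : (0:ℝ) ≤ 1 - 1/((n:ℝ)+1)),
      _root_.abs_of_pos hR]
    nlinarith
  have htend : Filter.Tendsto seq Filter.atTop (nhds pt) := by
    have h1 : Filter.Tendsto (fun n : ℕ => (1 - 1/((n:ℝ)+1)) * R)
        Filter.atTop (nhds ((1 - 0) * R)) := by
      exact (Filter.Tendsto.const_sub _ tendsto_one_div_add_atTop_nhds_zero_nat).mul_const R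
    have := (Complex.continuous_ofReal.tendsto ((1 - 0) * R)).comp h1
    simpa [hpt, Function.comp, hseq, one_div, Function.comp_def] using this
  have hcw : ContinuousWithinAt (fun w => u w - Q w) (closedBall (0:ℂ) R) pt :=
    (huc.sub hQc) pt hptcb
  have htend2 : Filter.Tendsto (fun n => u (seq n) - Q (seq n)) Filter.atTop
      (nhds (u pt - Q pt)) := by
    refine hcw.tendsto.comp ?_
    exact tendsto_nhdsWithin_of_tendsto_nhds_of_eventually_within seq htend
      (Filter.Eventually.of_forall fun n => ball_subset_closedBall (hmem n))
  have hconst : ∀ n, u (seq n) - Q (seq n) = M := fun n => hall (seq n) (hmem n)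
  have htconst : Filter.Tendsto (fun n => u (seq n) - Q (seq n)) Filter.atTop (nhds M) := by
    simp only [hconst]
    exact tendsto_const_nhds
  have : u pt - Q pt = M := tendsto_nhds_unique htend2 htconst
  have := hbd pt hptsph
  linarith
end
end
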